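/- Under the stated context, α and β are algebraic integers, (α + β)² and α·β are nonzero coprime rational integers, and α/β is not a unit, i.e., there is no u ∈ ℂ with both u and u⁻¹ algebraic integers such that α = u·β. -/

import Mathlib

open Polynomial IntermediateField

noncomputable def sqrtneg (c : ℕ) : ℂ := Complex.I * Real.sqrt c

lemma sqrtneg_sq (c : ℕ) : sqrtneg c ^ 2 = -(c : ℂ) := by
  have h : ((Real.sqrt c : ℝ) : ℂ) ^ 2 = (c : ℂ) := by
    rw [← Complex.ofReal_pow, Real.sq_sqrt (by positivity)]
    norm_num
  simp [sqrtneg, mul_pow, Complex.I_sq, h]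

lemma sqrtneg_isIntegral (c : ℕ) : IsIntegral ℚ (sqrtneg c) := by
  refine ⟨X ^ 2 + C (c : ℚ), monic_X_pow_add_C _ two_ne_zero, ?_⟩
  simp [eval₂_add, eval₂_pow, sqrtneg_sq c]

/-- The field `K = ℚ(√-c)`, realised as the subfield of `ℂ` generated by `i·√c`. -/
noncomputable def Kf (c : ℕ) : IntermediateField ℚ ℂ := ℚ⟮sqrtneg c⟯

/-- The class number of `ℚ(√-c)`. -/
noncomputable def classNumberK (c : ℕ) : ℕ :=
  haveI : FiniteDimensional ℚ (Kf c) :=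
    IntermediateField.adjoin.finiteDimensional (sqrtneg_isIntegral c)
  haveI : NumberField (Kf c) := ⟨⟩
  NumberField.classNumber (Kf c)

/- ### Auxiliary lemmas -/

lemma conj_sqrtneg (c : ℕ) : (starRingEnd ℂ) (sqrtneg c) = - sqrtneg c := by
  simp [sqrtneg]

lemma mem_Kf (c : ℕ) (z : ℂ) (hz : z ∈ Kf c) : ∃ r s : ℚ, z = (r:ℂ) + (s:ℂ) * sqrtneg c := by
  have halg : (Kf c).toSubalgebra = Algebra.adjoin ℚ {sqrtneg c} :=
    IntermediateField.adjoin_simple_toSubalgebra_of_isAlgebraic (sqrtneg_isIntegral c).isAlgebraic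
  have hz2 : z ∈ Algebra.adjoin ℚ {sqrtneg c} := by rw [← halg]; exact hz
  rw [Algebra.adjoin_singleton_eq_range_aeval] at hz2
  obtain ⟨P, hP⟩ := hz2
  set q : ℚ[X] := X ^ 2 + C (c:ℚ) with hq
  have hmonic : q.Monic := monic_X_pow_add_C _ two_ne_zero
  have hdeg : (P %ₘ q).degree < 2 := by
    have h1 := Polynomial.degree_modByMonic_lt P hmonic
    have h2 : q.degree = 2 := Polynomial.degree_X_pow_add_C (by norm_num) (c:ℚ)
    rwa [h2] at h1
  have hdeg1 : (P %ₘ q).degree ≤ 1 := Order.le_of_lt_succ (by exact_mod_cast hdeg)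
  have hrep := Polynomial.eq_X_add_C_of_degree_le_one hdeg1
  have heval : Polynomial.aeval (sqrtneg c) (P %ₘ q) = z := by
    conv_rhs => rw [← hP]
    show _ = Polynomial.aeval (sqrtneg c) P
    conv_rhs => rw [← Polynomial.modByMonic_add_div P q]
    rw [map_add, map_mul]
    have : Polynomial.aeval (sqrtneg c) q = 0 := by simp [hq, sqrtneg_sq]
    rw [this, zero_mul, add_zero]
  refine ⟨(P %ₘ q).coeff 0, (P %ₘ q).coeff 1, ?_⟩
  rw [← heval]
  conv_lhs => rw [hrep]
  simp only [map_add, map_mul, Polynomial.aeval_X, Polynomial.aeval_C]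
  rw [add_comm]
  norm_num [Algebra.smul_def]

lemma intCast_isIntegral (n : ℤ) : IsIntegral ℤ ((n:ℤ) : ℂ) := by
  have : ((n:ℤ):ℂ) = algebraMap ℤ ℂ n := by simp
  rw [this]
  exact isIntegral_algebraMap

lemma sqrtnat_isIntegral (n : ℕ) : IsIntegral ℤ ((Real.sqrt n : ℝ) : ℂ) := by
  refine ⟨X ^ 2 - C (n : ℤ), monic_X_pow_sub_C _ two_ne_zero, ?_⟩
  have h : ((Real.sqrt n : ℝ) : ℂ) ^ 2 = (n : ℂ) := by
    rw [← Complex.ofReal_pow, Real.sq_sqrt (by positivity)]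
    norm_num
  simp [eval₂_sub, eval₂_pow, h]

lemma conj_isIntegral {z : ℂ} (h : IsIntegral ℤ z) : IsIntegral ℤ ((starRingEnd ℂ) z) :=
  IsIntegral.map (starRingEnd ℂ).toIntAlgHom h

theorem quad_int (z a b : ℂ) (ha : IsIntegral ℤ a) (hb : IsIntegral ℤ b) (hz : z^2 = a*z + b) :
    IsIntegral ℤ z := by
  have hz' : IsIntegral (integralClosure ℤ ℂ) z := by
    refine ⟨X^2 + (C (-(⟨a, ha⟩ : integralClosure ℤ ℂ)) * X + C (-⟨b, hb⟩)), ?_, ?_⟩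
    · exact Polynomial.monic_X_pow_add (Polynomial.degree_linear_le.trans_lt (by decide))
    · simp only [eval₂_add, eval₂_mul, eval₂_pow, eval₂_X, eval₂_C]
      rw [show (algebraMap (↥(integralClosure ℤ ℂ)) ℂ) (-⟨a, ha⟩) = -a from rfl,
        show (algebraMap (↥(integralClosure ℤ ℂ)) ℂ) (-⟨b, hb⟩) = -b from rfl]
      rw [hz]; ring
  exact isIntegral_trans z hz'

lemma rat_int (q : ℚ) (h : IsIntegral ℤ (q:ℂ)) : ∃ n : ℤ, (n:ℚ) = q := by
  have : IsIntegral ℤ q := by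
    rw [← isIntegral_algebraMap_iff (algebraMap ℚ ℂ).injective]
    exact h
  exact IsIntegrallyClosed.isIntegral_iff.mp this

def lucasV (T N : ℤ) : ℕ → ℤ
  | 0 => 2
  | 1 => T
  | (k+2) => T * lucasV T N (k+1) - N * lucasV T N k

lemma lucasV_complex (T N : ℤ) (a b : ℂ) (hab : a + b = (T:ℂ)) (hmul : a * b = (N:ℂ)) :
    ∀ k, ((lucasV T N k : ℤ) : ℂ) = a^k + b^k := by
  have key : ∀ k, ((lucasV T N k : ℤ) : ℂ) = a^k + b^k ∧
      ((lucasV T N (k+1) : ℤ) : ℂ) = a^(k+1) + b^(k+1) := by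
    intro k
    induction k with
    | zero => constructor <;> norm_num [lucasV, hab]
    | succ n ih =>
      refine ⟨ih.2, ?_⟩
      show ((lucasV T N (n+2) : ℤ) : ℂ) = _
      rw [lucasV]
      push_cast
      rw [ih.1, ih.2, ← hab, ← hmul]
      ring
  exact fun k => (key k).1

lemma lucasV_mod (T N : ℤ) : ∀ k, N ∣ lucasV T N (k+1) - T^(k+1) := by
  intro k
  induction k with
  | zero => simp [lucasV]
  | succ n ih =>
    show N ∣ lucasV T N (n+2) - T^(n+2)
    rw [lucasV]
    have h : T * lucasV T N (n + 1) - N * lucasV T N n - T ^ (n + 2)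
        = T * (lucasV T N (n+1) - T^(n+1)) - N * lucasV T N n := by ring
    rw [h]
    exact dvd_sub (Dvd.dvd.mul_left ih T) (Dvd.intro _ rfl)

lemma den_one_of_sqf (c : ℕ) (hcsq : Squarefree c) (u : ℚ) (w : ℤ)
    (h : (c:ℚ) * u^2 = (w:ℚ)) : ∃ b : ℤ, (b:ℚ) = u := by
  have hu : (u.num:ℚ) = u * u.den := by rw [mul_comm, Rat.den_mul_eq_num]
  have key : (c:ℤ) * u.num^2 = w * (u.den:ℤ)^2 := by
    have h2 : (c:ℚ) * ((u.num:ℚ))^2 = (w:ℚ) * ((u.den:ℚ))^2 := by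
      rw [hu]; linear_combination ((u.den:ℚ))^2 * h
    exact_mod_cast h2
  have hdvd : u.den * u.den ∣ c * u.num.natAbs^2 := by
    have h1 : ((u.den:ℤ))^2 ∣ (c:ℤ) * u.num^2 := ⟨w, by linarith [key]⟩
    have h3 : (u.den^2 : ℕ) ∣ (c * u.num.natAbs^2 : ℕ) := by
      have := Int.natAbs_dvd_natAbs.mpr h1
      simpa [Int.natAbs_mul, Int.natAbs_pow] using this
    simpa [pow_two] using h3
  have hcop : Nat.Coprime (u.den * u.den) (u.num.natAbs^2) :=
    Nat.Coprime.pow_right 2 (u.reduced.symm.mul u.reduced.symm)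
  have hdvd2 : u.den * u.den ∣ c := Nat.Coprime.dvd_of_dvd_mul_right hcop hdvd
  have hden : u.den = 1 := Nat.isUnit_iff.mp (hcsq u.den hdvd2)
  exact ⟨u.num, by rw [← Rat.num_div_den u, hden]; norm_num⟩

lemma coords_int (c : ℕ) (hcsq : Squarefree c) (R S : ℚ)
    (hint : IsIntegral ℤ ((R:ℂ) + (S:ℂ) * sqrtneg c)) : ∃ b : ℤ, (b:ℚ) = 2*S := by
  set θ := sqrtneg c with hθdef
  set ζ : ℂ := (R:ℂ) + (S:ℂ) * θ with hζdef
  have hζc : (starRingEnd ℂ) ζ = (R:ℂ) - (S:ℂ) * θ := by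
    rw [hζdef, map_add, map_mul, map_ratCast, map_ratCast, conj_sqrtneg]; ring
  have htr : ζ + (starRingEnd ℂ) ζ = ((2*R : ℚ):ℂ) := by
    rw [hζc, hζdef]; push_cast; ring
  obtain ⟨a, ha⟩ := rat_int (2*R) (htr ▸ (hint.add (conj_isIntegral hint)))
  have hnm : ζ * (starRingEnd ℂ) ζ = ((R^2 + c*S^2 : ℚ):ℂ) := by
    rw [hζc, hζdef]; push_cast
    linear_combination (-(S:ℂ)^2) * sqrtneg_sq c
  obtain ⟨w, hw⟩ := rat_int (R^2 + c*S^2) (hnm ▸ (hint.mul (conj_isIntegral hint)))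
  have hkey : (c:ℚ) * (2*S)^2 = ((4*w - a^2 : ℤ):ℚ) := by
    push_cast
    linear_combination (-4)*hw + ((a:ℚ) + 2*R)*ha
  exact den_one_of_sqf c hcsq (2*S) _ hkey

lemma pow_ne_24 (y p : ℕ) (hp : p.Prime) (hpodd : Odd p) (hy : 0 < y) :
    y ^ p ≠ 2 ∧ y ^ p ≠ 4 := by
  have h2 := hp.two_le
  have hne2 : p ≠ 2 := by rintro rfl; simpa using Nat.odd_iff.mp hpodd
  have hp3 : 3 ≤ p := by omega
  rcases Nat.lt_or_ge y 2 with h | h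
  · interval_cases y
    simp
  · have h8 : 8 ≤ y ^ p :=
      calc (8:ℕ) = 2^3 := by norm_num
      _ ≤ y^3 := Nat.pow_le_pow_left h 3
      _ ≤ y^p := Nat.pow_le_pow_right (by omega) hp3
    omega
theorem stmt9 (C₁ C₂ c d : ℕ) (hC₁pos : 0 < C₁) (hC₁sqf : Squarefree C₁)
    (hC₂pos : 0 < C₂) (hcop : Nat.gcd C₁ C₂ = 1) (hmod8 : C₁ * C₂ % 8 ≠ 7)
    (hcpos : 0 < c) (hdpos : 0 < d) (hcsqf : Squarefree c)
    (hfact : C₁ * C₂ = c * d ^ 2)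
    (p : ℕ) (hp : p.Prime) (hpodd : Odd p)
    (hpcl : ¬ p ∣ classNumberK c)
    (hp3 : p = 3 → ¬ ∃ m : ℤ, (C₁ : ℤ) * (C₂ : ℤ) = 3 * m ^ 2)
    (x y : ℕ) (hxpos : 0 < x) (hypos : 0 < y)
    (heq : C₁ * x ^ 2 + C₂ = y ^ p)
    (hgcd : Nat.gcd (Nat.gcd (C₁ * x ^ 2) C₂) (y ^ p) = 1)
    (δ : ℂ) (hδK : δ ∈ Kf c) (hδint : IsIntegral ℤ δ)
    (hδeq : (C₁ : ℂ) ^ ((p - 1) / 2) * ((C₁ : ℂ) * (x : ℂ) + (d : ℂ) * sqrtneg c) = δ ^ p)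
    (α β : ℂ) (hα : α = δ / (Real.sqrt C₁ : ℂ))
    (hβ : β = (starRingEnd ℂ) δ / (Real.sqrt C₁ : ℂ))
    :
    IsIntegral ℤ α ∧ IsIntegral ℤ β ∧
    (∃ m k : ℤ, m ≠ 0 ∧ k ≠ 0 ∧ (α + β) ^ 2 = (m : ℂ) ∧ α * β = (k : ℂ) ∧ IsCoprime m k) ∧
    ¬ ∃ u : ℂ, IsIntegral ℤ u ∧ IsIntegral ℤ u⁻¹ ∧ α = u * β := by
  -- write p = 2e+1
  obtain ⟨e, hpe⟩ := hpodd
  have hee : (p - 1) / 2 = e := by omega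
  rw [hee] at hδeq
  have hp1 : p ≠ 0 := by omega
  have hp3' : 3 ≤ p := by
    have h2 := hp.two_le
    have hne2 : p ≠ 2 := by omega
    omega
  -- basic notation
  have hθ2 := sqrtneg_sq c
  have hθc := conj_sqrtneg c
  obtain ⟨r, s, hδrs⟩ := mem_Kf c δ hδK
  have hδcrs : (starRingEnd ℂ) δ = (r:ℂ) - (s:ℂ) * sqrtneg c := by
    rw [hδrs, map_add, map_mul, map_ratCast, map_ratCast, hθc]; ring
  -- nonzero casts
  have hC₁C : (C₁:ℂ) ≠ 0 := by exact_mod_cast hC₁pos.ne'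
  have hyC : (y:ℂ) ≠ 0 := by exact_mod_cast hypos.ne'
  have hsC2 : ((Real.sqrt C₁ : ℝ):ℂ)^2 = (C₁:ℂ) := by
    rw [← Complex.ofReal_pow, Real.sq_sqrt (by positivity)]; norm_num
  have hsC0 : ((Real.sqrt C₁ : ℝ):ℂ) ≠ 0 := by
    have : (0:ℝ) < Real.sqrt C₁ := Real.sqrt_pos.mpr (by exact_mod_cast hC₁pos)
    exact_mod_cast this.ne'
  have hCC : (c:ℂ) * (d:ℂ)^2 = (C₁:ℂ) * (C₂:ℂ) := by exact_mod_cast congrArg (Nat.cast (R := ℂ)) hfact.symm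
  have hypc : (C₁:ℂ) * (x:ℂ)^2 + (C₂:ℂ) = (y:ℂ)^p := by exact_mod_cast congrArg (Nat.cast (R := ℂ)) heq
  -- conjugate of the main equation
  have hconj_p : (starRingEnd ℂ) δ ^ p = (C₁:ℂ)^e * ((C₁:ℂ)*(x:ℂ) - (d:ℂ) * sqrtneg c) := by
    have h2 := congrArg (starRingEnd ℂ) hδeq
    rw [map_pow] at h2
    rw [← h2, map_mul, map_pow, map_add, map_mul, map_mul, hθc]
    simp only [Complex.conj_natCast]
    ring
  -- product of P and Q
  have hPQ : ((C₁:ℂ)*(x:ℂ) + (d:ℂ) * sqrtneg c) * ((C₁:ℂ)*(x:ℂ) - (d:ℂ) * sqrtneg c)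
      = (C₁:ℂ) * (y:ℂ)^p := by
    linear_combination (-(d:ℂ)^2) * hθ2 + hCC + (C₁:ℂ) * hypc
  -- norm of δ
  have hdd : δ * (starRingEnd ℂ) δ = ((r^2 + c*s^2 : ℚ):ℂ) := by
    rw [hδcrs, hδrs]; push_cast
    linear_combination (-(s:ℚ)^2 : ℂ) * hθ2
  have hNpow : ((r^2 + c*s^2 : ℚ):ℂ)^p = ((((C₁*y:ℕ):ℚ)):ℂ)^p := by
    rw [← hdd]
    calc (δ * (starRingEnd ℂ) δ)^p = δ^p * ((starRingEnd ℂ) δ)^p := mul_pow _ _ _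
    _ = ((C₁:ℂ)^e * ((C₁:ℂ)*(x:ℂ) + (d:ℂ) * sqrtneg c)) *
        ((C₁:ℂ)^e * ((C₁:ℂ)*(x:ℂ) - (d:ℂ) * sqrtneg c)) := by rw [hδeq, hconj_p]
    _ = (C₁:ℂ)^(2*e) * (((C₁:ℂ)*(x:ℂ) + (d:ℂ) * sqrtneg c) *
        ((C₁:ℂ)*(x:ℂ) - (d:ℂ) * sqrtneg c)) := by ring
    _ = (C₁:ℂ)^(2*e) * ((C₁:ℂ) * (y:ℂ)^p) := by rw [hPQ]
    _ = ((((C₁*y:ℕ):ℚ)):ℂ)^p := by push_cast; rw [hpe]; ring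
  have hNrat : (r^2 + c*s^2 : ℚ) = ((C₁*y:ℕ):ℚ) := by
    have hr : (r^2 + c*s^2 : ℚ)^p = ((C₁*y:ℕ):ℚ)^p := by exact_mod_cast hNpow
    have h1 : (0:ℚ) ≤ r^2 + c*s^2 := by positivity
    have h2 : (0:ℚ) ≤ ((C₁*y:ℕ):ℚ) := by positivity
    exact (pow_left_strictMonoOn₀ (M₀ := ℚ) hp1).injOn h1 h2 hr
  -- trace of δ is an integer
  have htr_eq : δ + (starRingEnd ℂ) δ = ((2*r : ℚ):ℂ) := by
    rw [hδcrs, hδrs]; push_cast; ring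
  obtain ⟨T, hT⟩ := rat_int (2*r) (htr_eq ▸ (hδint.add (conj_isIntegral hδint)))
  set N : ℤ := ((C₁ * y : ℕ) : ℤ) with hNdef
  have hab : δ + (starRingEnd ℂ) δ = (T:ℂ) := by
    rw [htr_eq]
    exact_mod_cast congrArg (fun q : ℚ => (q:ℂ)) hT.symm
  have hmul : δ * (starRingEnd ℂ) δ = (N:ℂ) := by
    rw [hdd, hNrat, hNdef]; push_cast; ring
  -- the p-th "trace": δ^p + conj δ^p
  have hsum : δ^p + ((starRingEnd ℂ) δ)^p = (((2*C₁^(e+1)*x : ℕ):ℤ):ℂ) := by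
    rw [← hδeq, hconj_p]; push_cast; ring
  have hVc := lucasV_complex T N δ ((starRingEnd ℂ) δ) hab hmul p
  have hVp : lucasV T N p = ((2*C₁^(e+1)*x : ℕ):ℤ) := by
    exact_mod_cast hVc.trans hsum
  -- C₁ divides T
  have hC₁N : (C₁:ℤ) ∣ N := ⟨(y:ℤ), by rw [hNdef]; push_cast; ring⟩
  have hC₁V : (C₁:ℤ) ∣ lucasV T N p := by
    rw [hVp]; exact ⟨(2*C₁^e*x : ℕ), by push_cast; ring⟩
  have hTp : (C₁:ℤ) ∣ T^p := by
    have h1 : N ∣ lucasV T N p - T^p := by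
      have := lucasV_mod T N (p-1)
      have hpp : p - 1 + 1 = p := by omega
      rwa [hpp] at this
    have : (C₁:ℤ) ∣ lucasV T N p - T^p := dvd_trans hC₁N h1
    have h2 : T^p = lucasV T N p - (lucasV T N p - T^p) := by ring
    rw [h2]
    exact dvd_sub hC₁V this
  have hC₁sqfZ : Squarefree (C₁:ℤ) := Int.squarefree_natCast.mpr hC₁sqf
  obtain ⟨s₀, hs₀⟩ := (hC₁sqfZ.dvd_pow_iff_dvd hp1).mp hTp
  -- T ≠ 0
  have hTne : T ≠ 0 := by
    intro h0
    have hcd : (starRingEnd ℂ) δ = -δ := by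
      have : δ + (starRingEnd ℂ) δ = 0 := by rw [hab, h0]; norm_num
      linear_combination this
    rw [hcd, Odd.neg_pow ⟨e, hpe⟩] at hsum
    have : ((2*C₁^(e+1)*x : ℕ):ℂ) = 0 := by push_cast at hsum ⊢; linear_combination -hsum
    have h0' : (2*C₁^(e+1)*x : ℕ) = 0 := by exact_mod_cast this
    have : 0 < 2*C₁^(e+1)*x := by positivity
    omega
  have hs₀ne : s₀ ≠ 0 := by
    intro h0; rw [h0, mul_zero] at hs₀; exact hTne hs₀
  -- quadratic equation for δ
  have hδsq : δ^2 = (T:ℂ) * δ - (N:ℂ) := by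
    rw [← hab, ← hmul]; ring
  have hδcsq : ((starRingEnd ℂ) δ)^2 = (T:ℂ) * ((starRingEnd ℂ) δ) - (N:ℂ) := by
    rw [← hab, ← hmul]; ring
  -- integrality of α and β
  have hTc : (T:ℂ) = (C₁:ℂ) * (s₀:ℂ) := by exact_mod_cast congrArg (fun n : ℤ => (n:ℂ)) hs₀
  have hNc : (N:ℂ) = (C₁:ℂ) * (y:ℂ) := by rw [hNdef]; push_cast; ring
  have hαint : IsIntegral ℤ α := by
    apply quad_int α ((s₀:ℂ) * ((Real.sqrt C₁ : ℝ):ℂ)) (-(y:ℂ))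
    · exact (intCast_isIntegral s₀).mul (sqrtnat_isIntegral C₁)
    · have : (-(y:ℂ)) = (((-(y:ℤ)):ℤ):ℂ) := by push_cast; ring
      rw [this]; exact intCast_isIntegral _
    · have hδC : δ = α * ((Real.sqrt C₁ : ℝ):ℂ) := by rw [hα]; field_simp
      have hδsq' : (α * ((Real.sqrt C₁ : ℝ):ℂ))^2
          = (T:ℂ) * (α * ((Real.sqrt C₁ : ℝ):ℂ)) - (N:ℂ) := by rw [← hδC]; exact hδsq
      apply mul_right_cancel₀ (pow_ne_zero 2 hsC0)
      linear_combination hδsq' + (α * ((Real.sqrt C₁ : ℝ):ℂ)) * hTc - hNc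
        + (-(s₀:ℂ) * α * ((Real.sqrt C₁ : ℝ):ℂ) + (y:ℂ)) * hsC2
  have hβint : IsIntegral ℤ β := by
    apply quad_int β ((s₀:ℂ) * ((Real.sqrt C₁ : ℝ):ℂ)) (-(y:ℂ))
    · exact (intCast_isIntegral s₀).mul (sqrtnat_isIntegral C₁)
    · have : (-(y:ℂ)) = (((-(y:ℤ)):ℤ):ℂ) := by push_cast; ring
      rw [this]; exact intCast_isIntegral _
    · have hδC : (starRingEnd ℂ) δ = β * ((Real.sqrt C₁ : ℝ):ℂ) := by rw [hβ]; field_simp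
      have hδsq' : (β * ((Real.sqrt C₁ : ℝ):ℂ))^2
          = (T:ℂ) * (β * ((Real.sqrt C₁ : ℝ):ℂ)) - (N:ℂ) := by rw [← hδC]; exact hδcsq
      apply mul_right_cancel₀ (pow_ne_zero 2 hsC0)
      linear_combination hδsq' + (β * ((Real.sqrt C₁ : ℝ):ℂ)) * hTc - hNc
        + (-(s₀:ℂ) * β * ((Real.sqrt C₁ : ℝ):ℂ) + (y:ℂ)) * hsC2
  -- the integers m and k
  have hm_eq : (α + β)^2 = (((C₁:ℤ) * s₀^2 : ℤ):ℂ) := by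
    have hαβ : α + β = (T:ℂ) / ((Real.sqrt C₁ : ℝ):ℂ) := by
      rw [hα, hβ, ← add_div, hab]
    rw [hαβ, div_pow]
    rw [hsC2]
    rw [hTc]
    push_cast
    field_simp
  have hk_eq : α * β = (((y:ℤ)):ℂ) := by
    rw [hα, hβ, div_mul_div_comm, hmul, hNc, ← hsC2]
    push_cast
    field_simp
  have hmne : ((C₁:ℤ) * s₀^2 : ℤ) ≠ 0 := by
    have : (C₁:ℤ) ≠ 0 := by exact_mod_cast hC₁pos.ne'
    positivity
  have hkne : ((y:ℤ)) ≠ 0 := by exact_mod_cast hypos.ne'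
  -- coprimality
  have hcoprime : IsCoprime ((C₁:ℤ) * s₀^2) ((y:ℤ)) := by
    rw [Int.isCoprime_iff_gcd_eq_one]
    by_contra hg
    obtain ⟨q, hq, hqdvd⟩ := Nat.exists_prime_and_dvd hg
    have hqy : q ∣ y := by
      have h1 : q ∣ Int.gcd ((C₁:ℤ) * s₀^2) ((y:ℤ)) := hqdvd
      have h2 : Int.gcd ((C₁:ℤ) * s₀^2) ((y:ℤ)) ∣ ((y:ℤ)).natAbs := Nat.gcd_dvd_right _ _
      have h3 : q ∣ ((y:ℤ)).natAbs := h1.trans h2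
      simpa using h3
    have hqm : (q:ℤ) ∣ (C₁:ℤ) * s₀^2 := by
      have h1 : q ∣ Int.gcd ((C₁:ℤ) * s₀^2) ((y:ℤ)) := hqdvd
      have h2 : q ∣ ((C₁:ℤ) * s₀^2).natAbs := h1.trans (Nat.gcd_dvd_left _ _)
      have h3 : ((q:ℕ):ℤ) ∣ ((((C₁:ℤ) * s₀^2).natAbs : ℕ):ℤ) := Int.ofNat_dvd.mpr h2
      exact h3.trans (Int.natAbs_dvd.mpr dvd_rfl)
    -- q does not divide C₁x², C₂, C₁, x, d
    have hqyp : q ∣ y^p := dvd_pow hqy hp1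
    have hnC1x : ¬ q ∣ C₁ * x^2 := by
      intro hdvd
      have hC2 : q ∣ C₂ := (Nat.dvd_add_right hdvd).mp (heq ▸ hqyp)
      have : q ∣ 1 := hgcd ▸ Nat.dvd_gcd (Nat.dvd_gcd hdvd hC2) hqyp
      exact hq.one_lt.ne' (Nat.dvd_one.mp this)
    have hnC2 : ¬ q ∣ C₂ := by
      intro hdvd
      have hC1x : q ∣ C₁ * x^2 := by
        have h4 : C₁ * x ^ 2 = y^p - C₂ := by omega
        rw [h4]; exact Nat.dvd_sub hqyp hdvd
      exact hnC1x hC1x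
    have hnC1 : ¬ q ∣ C₁ := fun h => hnC1x (h.mul_right _)
    have hnx : ¬ q ∣ x := fun h => hnC1x ((dvd_pow h two_ne_zero).mul_left C₁)
    have hnd : ¬ q ∣ d := by
      intro h
      have h1 : q ∣ C₁ * C₂ := hfact ▸ (dvd_pow h two_ne_zero).mul_left c
      rcases (Nat.Prime.dvd_mul hq).mp h1 with h2 | h2
      · exact hnC1 h2
      · exact hnC2 h2
    -- q divides T
    have hqZ : Prime (q:ℤ) := Nat.prime_iff_prime_int.mp hq
    have hqs₀ : (q:ℤ) ∣ s₀ := by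
      rcases hqZ.dvd_mul.mp hqm with h1 | h1
      · exact absurd (Int.ofNat_dvd.mp (Int.dvd_natAbs.mpr h1)) hnC1
      · exact hqZ.dvd_of_dvd_pow h1
    have hqT : (q:ℤ) ∣ T := hs₀ ▸ Dvd.dvd.mul_left hqs₀ _
    have hqN : (q:ℤ) ∣ N := by
      rw [hNdef]
      exact Int.ofNat_dvd.mpr (Dvd.dvd.mul_left hqy _) |>.trans dvd_rfl
    obtain ⟨T', hT'⟩ := hqT
    obtain ⟨N', hN'⟩ := hqN
    -- γ with δ² = qγ
    set γ : ℂ := (T':ℂ) * δ - (N':ℂ) with hγdef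
    have hγint : IsIntegral ℤ γ :=
      ((intCast_isIntegral T').mul hδint).sub (intCast_isIntegral N')
    have hqC : ((q:ℕ):ℂ) ≠ 0 := by exact_mod_cast hq.pos.ne'
    have hγ2 : δ^2 = (q:ℂ) * γ := by
      rw [hγdef, hδsq]
      have hT'c : (T:ℂ) = (q:ℂ) * (T':ℂ) := by exact_mod_cast congrArg (fun n:ℤ => (n:ℂ)) hT'
      have hN'c : (N:ℂ) = (q:ℂ) * (N':ℂ) := by exact_mod_cast congrArg (fun n:ℤ => (n:ℂ)) hN'
      rw [hT'c, hN'c]; ring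
    -- compute γ^p in coordinates
    set A₀ : ℤ := (C₁:ℤ)^(2*e) * ((C₁:ℤ)^2*(x:ℤ)^2 - (C₁:ℤ)*(C₂:ℤ)) with hA₀def
    set B₀ : ℤ := 2*(C₁:ℤ)^(2*e+1)*(x:ℤ)*(d:ℤ) with hB₀def
    have hδ2p : (δ^2)^p = ((A₀:ℤ):ℂ) + ((B₀:ℤ):ℂ) * sqrtneg c := by
      have h1 : (δ^2)^p = (δ^p)^2 := by rw [← pow_mul, ← pow_mul, mul_comm]
      rw [h1, ← hδeq, hA₀def, hB₀def]
      push_cast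
      linear_combination ((d:ℂ)^2 * (C₁:ℂ)^(2*e)) * hθ2 - (C₁:ℂ)^(2*e) * hCC
    have hqpC : ((q:ℂ))^p ≠ 0 := pow_ne_zero _ hqC
    have hζeq : γ^p = (((A₀:ℚ)/(q:ℚ)^p : ℚ):ℂ) + (((B₀:ℚ)/(q:ℚ)^p : ℚ):ℂ) * sqrtneg c := by
      have h1 : (q:ℂ)^p * γ^p = ((A₀:ℤ):ℂ) + ((B₀:ℤ):ℂ) * sqrtneg c := by
        rw [← hδ2p, hγ2, mul_pow]
      have hqQ : ((q:ℚ))^p ≠ 0 := by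
        have : (q:ℚ) ≠ 0 := by exact_mod_cast hq.pos.ne'
        exact pow_ne_zero _ this
      field_simp
      push_cast at h1 ⊢
      have hinv : ((q:ℂ)⁻¹)^p * (q:ℂ)^p = 1 := by rw [← mul_pow, inv_mul_cancel₀ hqC, one_pow]
      linear_combination ((q:ℂ)⁻¹)^p * h1 - ((T':ℂ) * δ - (N':ℂ))^p * hinv
    obtain ⟨b, hb⟩ := coords_int c hcsqf _ _ (hζeq ▸ (hγint.pow p))
    -- q^p divides 4*C₁^(2e+1)*x*d
    have hbZ : b * (q:ℤ)^p = 2*B₀ := by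
      have h1 : (b:ℚ) * ((q:ℚ))^p = 2*(B₀:ℚ) := by
        rw [hb]
        have hqQ : ((q:ℚ))^p ≠ 0 := by
          have : (q:ℚ) ≠ 0 := by exact_mod_cast hq.pos.ne'
          exact pow_ne_zero _ this
        field_simp
      exact_mod_cast h1
    have hdvd4 : (q:ℤ)^p ∣ 2*B₀ := ⟨b, by rw [← hbZ]; ring⟩
    have hdvdN : q^p ∣ 4*(C₁^(2*e+1)*x*d) := by
      have h1 : ((q^p : ℕ):ℤ) ∣ ((4*(C₁^(2*e+1)*x*d) : ℕ):ℤ) := by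
        push_cast
        have h2 : ((4*(C₁^(2*e+1)*x*d) : ℕ):ℤ) = 2*B₀ := by rw [hB₀def]; push_cast; ring
        rw [show ((q:ℤ))^p = (((q^p:ℕ):ℤ)) from by push_cast; ring] at hdvd4
        have := h2 ▸ hdvd4
        exact_mod_cast this
      exact_mod_cast h1
    have hcopM : Nat.Coprime (q^p) (C₁^(2*e+1)*x*d) := by
      have h1 : Nat.Coprime q (C₁^(2*e+1)*x*d) := by
        have hc1 : Nat.Coprime q C₁ := (Nat.Prime.coprime_iff_not_dvd hq).mpr hnC1
        have hcx : Nat.Coprime q x := (Nat.Prime.coprime_iff_not_dvd hq).mpr hnx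
        have hcd2 : Nat.Coprime q d := (Nat.Prime.coprime_iff_not_dvd hq).mpr hnd
        exact ((hc1.pow_right _).mul_right hcx).mul_right hcd2
      exact h1.pow_left _
    have hq4 : q^p ∣ 4 := hcopM.dvd_of_dvd_mul_right hdvdN
    have h4 : q^p ≤ 4 := Nat.le_of_dvd (by norm_num) hq4
    have h8 : 8 ≤ q^p :=
      calc (8:ℕ) = 2^3 := by norm_num
      _ ≤ q^3 := Nat.pow_le_pow_left hq.two_le 3
      _ ≤ q^p := Nat.pow_le_pow_right hq.pos hp3'
    omega
  refine ⟨hαint, hβint, ⟨(C₁:ℤ)*s₀^2, (y:ℤ), hmne, hkne, hm_eq, hk_eq, hcoprime⟩, ?_⟩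
  -- no unit u with α = u β
  rintro ⟨u, hu, huinv, huβ⟩
  have hδu : δ = u * (starRingEnd ℂ) δ := by
    rw [hα, hβ] at huβ
    field_simp at huβ
    exact huβ
  have hδne : δ ≠ 0 := by
    intro h0
    have h1 : (N:ℂ) = 0 := by rw [← hmul, h0, zero_mul]
    have h2 : N = 0 := by exact_mod_cast h1
    rw [hNdef] at h2
    have h3 : C₁ * y = 0 := by exact_mod_cast h2
    have : 0 < C₁ * y := by positivity
    omega
  have hδcne : (starRingEnd ℂ) δ ≠ 0 := by
    intro h0
    apply hδne
    have h1 := congrArg (starRingEnd ℂ) h0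
    simpa using h1
  set w := u^p with hwdef
  have hwint : IsIntegral ℤ w := hu.pow p
  have hwinv : IsIntegral ℤ w⁻¹ := by rw [hwdef, ← inv_pow]; exact huinv.pow p
  have hwp : δ^p = w * ((starRingEnd ℂ) δ)^p := by rw [hwdef, ← mul_pow, ← hδu]
  set P := (C₁:ℂ)*(x:ℂ) + (d:ℂ)*sqrtneg c with hPdef
  set Q := (C₁:ℂ)*(x:ℂ) - (d:ℂ)*sqrtneg c with hQdef
  have hCe : (C₁:ℂ)^e ≠ 0 := pow_ne_zero _ hC₁C
  have hPw : P = w * Q := by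
    have h1 : (C₁:ℂ)^e * P = w * ((C₁:ℂ)^e * Q) := by
      rw [hδeq, hwp, hconj_p]
    apply mul_left_cancel₀ hCe
    rw [h1]; ring
  have hPQne : P * Q ≠ 0 := by
    rw [hPQ]; exact mul_ne_zero hC₁C (pow_ne_zero _ hyC)
  have hPne : P ≠ 0 := fun h => hPQne (by rw [h, zero_mul])
  have hQne : Q ≠ 0 := fun h => hPQne (by rw [h, mul_zero])
  have hypCne : ((y:ℂ))^p ≠ 0 := pow_ne_zero _ hyC
  -- the rational number w + w⁻¹
  set ρq : ℚ := (2*((C₁:ℚ)*(x:ℚ)^2 - (C₂:ℚ))) / ((y:ℚ)^p) with hρdef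
  have hcast : ((ρq:ℚ):ℂ) = (2*((C₁:ℂ)*(x:ℂ)^2 - (C₂:ℂ))) / ((y:ℂ)^p) := by
    rw [hρdef]; push_cast; ring
  have hsumw : w + w⁻¹ = ((ρq:ℚ):ℂ) := by
    have hwval : w = P / Q := (eq_div_iff hQne).mpr hPw.symm
    rw [hcast, hwval, inv_div, div_add_div _ _ hQne hPne, div_eq_div_iff (mul_ne_zero hQne hPne) hypCne]
    linear_combination (2*(d:ℂ)^2*(y:ℂ)^p + 2*((C₁:ℂ)*(x:ℂ)^2 - (C₂:ℂ))*(d:ℂ)^2) * hθ2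
      + (-2*(y:ℂ)^p - 2*(C₁:ℂ)*(x:ℂ)^2 + 2*(C₂:ℂ)) * hCC
      + (-2*(C₁:ℂ)*((C₁:ℂ)*(x:ℂ)^2 - (C₂:ℂ))) * hypc
  obtain ⟨Z, hZ⟩ := rat_int ρq (hsumw ▸ (hwint.add hwinv))
  -- the integer equation
  have hyQne : ((y:ℚ))^p ≠ 0 := pow_ne_zero _ (by exact_mod_cast hypos.ne')
  have hZeq : Z * (((y^p : ℕ)):ℤ) = 2*(((C₁ * x^2 : ℕ):ℤ) - ((C₂:ℕ):ℤ)) := by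
    have h1 : (Z:ℚ) * ((y:ℚ)^p) = 2*((C₁:ℚ)*(x:ℚ)^2 - (C₂:ℚ)) := by
      rw [hZ, hρdef]; field_simp
    exact_mod_cast h1
  have hheqZ : ((C₁ * x^2 : ℕ):ℤ) + ((C₂:ℕ):ℤ) = (((y^p : ℕ)):ℤ) := by exact_mod_cast heq
  have hapos : 0 < C₁ * x^2 := by positivity
  have hYpos : (0:ℤ) < (((y^p : ℕ)):ℤ) := by positivity
  have hZ3 : Z = -1 ∨ Z = 0 ∨ Z = 1 := by
    have h1 : Z * (((y^p : ℕ)):ℤ) < 2 * (((y^p : ℕ)):ℤ) := by omega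
    have h2 : (-2 : ℤ) * (((y^p : ℕ)):ℤ) < Z * (((y^p : ℕ)):ℤ) := by omega
    have h3 : Z < 2 := lt_of_mul_lt_mul_right (by omega) hYpos.le
    have h4 : (-2:ℤ) < Z := lt_of_mul_lt_mul_right (by omega) hYpos.le
    omega
  have hodd : Odd p := ⟨e, hpe⟩
  rcases hZ3 with hZv | hZv | hZv <;> rw [hZv] at hZeq
  · -- C₂ = 3 C₁x², y^p = 4 C₁x²
    have ha1 : C₂ = 3 * (C₁*x^2) ∧ y^p = 4 * (C₁*x^2) := by constructor <;> omega
    have hdvd1 : (C₁*x^2) ∣ Nat.gcd (C₁*x^2) C₂ := Nat.dvd_gcd dvd_rfl ⟨3, by omega⟩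
    have hdvd2 : (C₁*x^2) ∣ 1 := hgcd ▸ Nat.dvd_gcd hdvd1 ⟨4, by omega⟩
    have h1 : C₁*x^2 = 1 := Nat.dvd_one.mp hdvd2
    exact (pow_ne_24 y p hp hodd hypos).2 (by omega)
  · -- C₁x² = C₂, y^p = 2C₂
    have hdvd1 : C₂ ∣ Nat.gcd (C₁*x^2) C₂ := Nat.dvd_gcd ⟨1, by omega⟩ dvd_rfl
    have hdvd2 : C₂ ∣ 1 := hgcd ▸ Nat.dvd_gcd hdvd1 ⟨2, by omega⟩
    have h1 : C₂ = 1 := Nat.dvd_one.mp hdvd2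
    exact (pow_ne_24 y p hp hodd hypos).1 (by omega)
  · -- C₁x² = 3C₂, y^p = 4C₂
    have hdvd1 : C₂ ∣ Nat.gcd (C₁*x^2) C₂ := Nat.dvd_gcd ⟨3, by omega⟩ dvd_rfl
    have hdvd2 : C₂ ∣ 1 := hgcd ▸ Nat.dvd_gcd hdvd1 ⟨4, by omega⟩
    have h1 : C₂ = 1 := Nat.dvd_one.mp hdvd2
    exact (pow_ne_24 y p hp hodd hypos).2 (by omega)
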